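/- In the per-impression GSP setting, any feasible stable matching with assignment μ = {(1,1),...,(k,k)} satisfies p_j ≥ b_{j+1} for every slot j ≤ k. Consequently the matching with prices p_j = b_{j+1} is bidder-optimal among feasible stable matchings. -/

import Mathlib

/-- An auction instance: values `v`, maximum prices `m`, reserve prices `r`. -/
structure Auction (I J : Type) where
  v : I → J → ℝ
  m : I → J → ℝ
  r : I → J → ℝ

/-- A matching `(u, p, μ)` is feasible for an auction. -/
def Feasible {I J : Type} (A : Auction I J) (u : I → ℝ) (p : J → ℝ)
    (μ : I → Option J) : Prop :=
  (∀ i i' j, μ i = some j → μ i' = some j → i = i') ∧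
  (∀ i j, μ i = some j → A.r i j ≤ p j ∧ p j ≤ A.m i j ∧ u i + p j = A.v i j) ∧
  (∀ i, μ i = none → u i = 0) ∧
  (∀ j, (∀ i, μ i ≠ some j) → p j = 0) ∧
  (∀ i, 0 ≤ u i) ∧ (∀ j, 0 ≤ p j)

/-- Stability: every bidder-slot pair satisfies one of the three inequalities. -/
def Stable {I J : Type} (A : Auction I J) (u : I → ℝ) (p : J → ℝ) : Prop :=
  ∀ i j, u i + p j ≥ A.v i j ∨ p j ≥ A.m i j ∨ u i + A.r i j ≥ A.v i j

/-- A blocking pair violates all three stability inequalities. -/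
def Blocking {I J : Type} (A : Auction I J) (u : I → ℝ) (p : J → ℝ)
    (i : I) (j : J) : Prop :=
  u i + p j < A.v i j ∧ p j < A.m i j ∧ u i + A.r i j < A.v i j

/-- A bidder-optimal feasible stable matching. -/
def BidderOptimal {I J : Type} (A : Auction I J) (ustar : I → ℝ) (pstar : J → ℝ)
    (μstar : I → Option J) : Prop :=
  Feasible A ustar pstar μstar ∧ Stable A ustar pstar ∧
  ∀ u p μ, Feasible A u p μ → Stable A u p → ∀ i, u i ≤ ustar i

/-- The max-value encoding of per-impression GSP bidders:
`v_{i,j} = M(k-j)` (0-indexed slots), `m_{i,j} = b_i`, `r_{i,j} = 0`. -/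
def gspAuction (n k : ℕ) (b : Fin n → ℝ) (M : ℝ) : Auction (Fin n) (Fin k) :=
  ⟨fun _ j => M * ((k : ℝ) - (j : ℝ)), fun i _ => b i, fun _ _ => 0⟩


section GSPHelpers

variable {n k : ℕ} {b : Fin n → ℝ} {M : ℝ} {u : Fin n → ℝ} {p : Fin k → ℝ}
  {μ : Fin n → Option (Fin k)}

/-- Simplified stability: for every pair, either the price reaches the bid, or
the pair satisfies the value inequality. -/
lemma gsp_stab (hp : ∀ j, 0 ≤ p j) (hS : Stable (gspAuction n k b M) u p)
    (i : Fin n) (j : Fin k) :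
    b i ≤ p j ∨ M * ((k : ℝ) - (j : ℝ)) ≤ u i + p j := by
  have h := hS i j
  simp only [gspAuction, ge_iff_le, add_zero] at h
  rcases h with h | h | h
  · exact Or.inr h
  · exact Or.inl h
  · exact Or.inr (by linarith [hp j])

lemma gsp_b_lt_M (hb : StrictAnti b) (hnk : k < n)
    (hM : b ⟨0, Nat.lt_of_le_of_lt (Nat.zero_le k) hnk⟩ < M) (i : Fin n) :
    b i < M := by
  refine lt_of_le_of_lt ?_ hM
  exact hb.antitone (by simp [Fin.le_def])

lemma gsp_M_pos (hb : StrictAnti b) (hbpos : ∀ i, 0 < b i) (hnk : k < n)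
    (hM : b ⟨0, Nat.lt_of_le_of_lt (Nat.zero_le k) hnk⟩ < M) : 0 < M :=
  lt_trans (hbpos _) hM

/-- Under the diagonal assignment, bidders with index ≥ k are unmatched. -/
lemma gsp_none_of_diag
    (hinj : ∀ i i' j, μ i = some j → μ i' = some j → i = i')
    (hnk : k < n)
    (hdiag : ∀ i : Fin n, ∀ h : (i : ℕ) < k, μ i = some ⟨(i : ℕ), h⟩) :
    ∀ i : Fin n, k ≤ (i : ℕ) → μ i = none := by
  intro i hi
  cases hμ : μ i with
  | none => rfl
  | some j =>
    exfalso
    have hj : μ ⟨(j : ℕ), lt_trans j.isLt hnk⟩ = some j := by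
      have := hdiag ⟨(j : ℕ), lt_trans j.isLt hnk⟩ j.isLt
      simpa using this
    have := hinj i ⟨(j : ℕ), lt_trans j.isLt hnk⟩ j hμ hj
    have : (i : ℕ) = (j : ℕ) := by rw [this]
    omega

/-- Key price lower bound under the diagonal assignment. -/
lemma gsp_price_lb (hnk : k < n) (hb : StrictAnti b) (hbpos : ∀ i, 0 < b i)
    (hM : b ⟨0, Nat.lt_of_le_of_lt (Nat.zero_le k) hnk⟩ < M)
    (hF : Feasible (gspAuction n k b M) u p μ)
    (hS : Stable (gspAuction n k b M) u p)
    (hdiag : ∀ i : Fin n, ∀ h : (i : ℕ) < k, μ i = some ⟨(i : ℕ), h⟩)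
    (j : Fin k) (h1 : (j : ℕ) + 1 < n) : b ⟨(j : ℕ) + 1, h1⟩ ≤ p j := by
  obtain ⟨hinj, hmatch, hnone, hslot, hu0, hp0⟩ := hF
  have hMpos := gsp_M_pos hb hbpos hnk hM
  set i1 : Fin n := ⟨(j : ℕ) + 1, h1⟩ with hi1
  have hjk : ((j : ℕ) : ℝ) + 1 ≤ (k : ℝ) := by exact_mod_cast j.isLt
  -- bound on the utility of bidder j+1
  have hub : u i1 ≤ M * ((k : ℝ) - (j : ℝ)) - M := by
    by_cases hc : (j : ℕ) + 1 < k
    · have hm := hmatch i1 ⟨(j : ℕ) + 1, hc⟩ (hdiag i1 hc)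
      simp only [gspAuction] at hm
      have hpj1 := hp0 ⟨(j : ℕ) + 1, hc⟩
      have : u i1 + p ⟨(j : ℕ) + 1, hc⟩ =
          M * ((k : ℝ) - (((j : ℕ) : ℝ) + 1)) := by
        have := hm.2.2
        convert this using 3
        push_cast
        ring
      nlinarith
    · have hkeq : (j : ℕ) + 1 = k := by omega
      have : μ i1 = none := gsp_none_of_diag hinj hnk hdiag i1 hkeq.ge
      have hz := hnone i1 this
      have : ((j : ℕ) : ℝ) + 1 = (k : ℝ) := by exact_mod_cast hkeq
      nlinarith
  rcases gsp_stab hp0 hS i1 j with h | h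
  · exact h
  · have : M ≤ p j := by linarith
    exact le_trans (le_of_lt (gsp_b_lt_M hb hnk hM i1)) this

end GSPHelpers


/-- Every feasible stable matching for the GSP auction is diagonal. -/
lemma gsp_diag {n k : ℕ} {b : Fin n → ℝ} {M : ℝ} {u : Fin n → ℝ} {p : Fin k → ℝ}
    {μ : Fin n → Option (Fin k)}
    (hnk : k < n) (hb : StrictAnti b) (hbpos : ∀ i, 0 < b i)
    (hM : b ⟨0, Nat.lt_of_le_of_lt (Nat.zero_le k) hnk⟩ < M)
    (hF : Feasible (gspAuction n k b M) u p μ)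
    (hS : Stable (gspAuction n k b M) u p) :
    ∀ i : Fin n, ∀ h : (i : ℕ) < k, μ i = some ⟨(i : ℕ), h⟩ := by
  obtain ⟨hinj, hmatch, hnone, hslot, hu0, hp0⟩ := hF
  have hMpos := gsp_M_pos hb hbpos hnk hM
  have hbM := gsp_b_lt_M hb hnk hM
  have hcast : ∀ j : Fin k, M ≤ M * ((k : ℝ) - (j : ℝ)) := by
    intro j
    have : ((j : ℕ) : ℝ) + 1 ≤ (k : ℝ) := by exact_mod_cast j.isLt
    nlinarith
  -- some bidder is unmatched
  have hum : ∃ t, μ t = none := by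
    by_contra h
    push_neg at h
    have h' : ∀ t, ∃ j, μ t = some j := by
      intro t
      cases hμ : μ t with
      | none => exact absurd hμ (h t)
      | some j => exact ⟨j, rfl⟩
    choose f hf using h'
    have hfinj : Function.Injective f := by
      intro a a' hee
      exact hinj a a' (f a) (hf a) (by rw [hee]; exact hf a')
    have := Fintype.card_le_of_injective f hfinj
    simp only [Fintype.card_fin] at this
    omega
  -- all slots are matched
  have hallslots : ∀ j : Fin k, ∃ i, μ i = some j := by
    intro j
    by_contra h
    push_neg at h
    have hpj : p j = 0 := hslot j h
    obtain ⟨t0, ht0⟩ := hum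
    have hu : u t0 = 0 := hnone t0 ht0
    rcases gsp_stab hp0 hS t0 j with hc | hc
    · rw [hpj] at hc; exact absurd hc (not_le.mpr (hbpos t0))
    · rw [hu, hpj] at hc; have := hcast j; linarith
  choose σ hσ using hallslots
  have hσinj : Function.Injective σ := by
    intro a a' h
    have h1 := hσ a
    rw [h] at h1
    exact Option.some_injective _ ((hσ a').symm.trans h1) |>.symm
  -- main strong induction
  have main : ∀ m : ℕ, ∀ hm : m < k, μ ⟨m, lt_trans hm hnk⟩ = some ⟨m, hm⟩ := by
    intro m
    induction m using Nat.strong_induction_on with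
    | _ m IH =>
    intro hm
    set im : Fin n := ⟨m, lt_trans hm hnk⟩ with him
    -- bidder m is matched
    have hmatched : ∃ j, μ im = some j := by
      by_contra h
      push_neg at h
      have hnone' : μ im = none := by
        cases hμ : μ im with
        | none => rfl
        | some j => exact absurd hμ (h j)
      have hu : u im = 0 := hnone im hnone'
      have hσlt : ∀ j : Fin k, (σ j : ℕ) < m := by
        intro j
        have hpb : p j ≤ b (σ j) := by
          have := (hmatch (σ j) j (hσ j)).2.1
          simpa [gspAuction] using this
        have hbp : b im ≤ p j := by
          rcases gsp_stab hp0 hS im j with hc | hc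
          · exact hc
          · rw [hu] at hc
            have := hcast j
            linarith [le_of_lt (hbM im)]
        have hle : σ j ≤ im := hb.le_iff_ge.mp (le_trans hbp hpb)
        have hne : σ j ≠ im := by
          intro he
          have h1 := hσ j
          rw [he, hnone'] at h1
          exact absurd h1 (by simp)
        have h2 : (σ j : ℕ) ≤ m := hle
        have h3 : (σ j : ℕ) ≠ m := fun hh => hne (Fin.ext hh)
        omega
      have hσinj' : Function.Injective (fun j : Fin k => (⟨(σ j : ℕ), hσlt j⟩ : Fin m)) := by
        intro a a' h
        have h' := congrArg (Fin.val (n := m)) h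
        exact hσinj (Fin.ext h')
      have := Fintype.card_le_of_injective _ hσinj'
      simp only [Fintype.card_fin] at this
      omega
    obtain ⟨jm, hjm⟩ := hmatched
    by_cases heq : (jm : ℕ) = m
    · have : jm = ⟨m, hm⟩ := Fin.ext heq
      rw [hjm, this]
    · exfalso
      -- jm.val > m
      have hge : m < (jm : ℕ) := by
        rcases Nat.lt_or_ge (jm : ℕ) m with hlt | hge2
        · exfalso
          have hIH := IH (jm : ℕ) hlt (lt_trans hlt hm)
          have hIH' : μ ⟨(jm : ℕ), lt_trans (lt_trans hlt hm) hnk⟩ = some jm := by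
            rw [hIH]
          have heqi := hinj im _ jm hjm hIH'
          have : m = (jm : ℕ) := congrArg Fin.val heqi
          omega
        · omega
      set jm0 : Fin k := ⟨m, hm⟩ with hjm0
      set i2 : Fin n := σ jm0 with hi2def
      have hi2 : μ i2 = some jm0 := hσ jm0
      have hne : i2 ≠ im := by
        intro he
        rw [he, hjm] at hi2
        have : (jm : ℕ) = m := congrArg Fin.val (Option.some_injective _ hi2)
        omega
      have hi2gt : m < (i2 : ℕ) := by
        rcases Nat.lt_or_ge (i2 : ℕ) m with hlt | hge2
        · exfalso
          have hIH := IH (i2 : ℕ) hlt (lt_trans hlt hm)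
          have heta : (⟨(i2 : ℕ), lt_trans (lt_trans hlt hm) hnk⟩ : Fin n) = i2 :=
            Fin.ext rfl
          rw [heta, hi2] at hIH
          have : (i2 : ℕ) = m :=
            congrArg Fin.val (Option.some_injective _ hIH.symm)
          omega
        · have : (i2 : ℕ) ≠ m := fun hh => hne (Fin.ext hh)
          omega
      have hpb : p jm0 ≤ b i2 := by
        have := (hmatch i2 jm0 hi2).2.1
        simpa [gspAuction] using this
      have hbi2 : b i2 < b im := hb (show im < i2 from hi2gt)
      rcases gsp_stab hp0 hS im jm0 with hc | hc
      · linarith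
      · have hmm := (hmatch im jm hjm).2.2
        simp only [gspAuction] at hmm
        have hpjm := hp0 jm
        have hcge : (m : ℝ) + 1 ≤ ((jm : ℕ) : ℝ) := by exact_mod_cast hge
        have hc' : M * ((k : ℝ) - (m : ℝ)) ≤ u im + p jm0 := hc
        have hprod : 0 ≤ M * (((jm : ℕ) : ℝ) - (m : ℝ) - 1) :=
          mul_nonneg hMpos.le (by linarith)
        have hexp : M * ((k : ℝ) - (m : ℝ)) - M * ((k : ℝ) - ((jm : ℕ) : ℝ))
            = M * (((jm : ℕ) : ℝ) - (m : ℝ)) := by ring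
        have hexp2 : M * (((jm : ℕ) : ℝ) - (m : ℝ) - 1)
            = M * (((jm : ℕ) : ℝ) - (m : ℝ)) - M := by ring
        linarith [hbM i2]
  intro i hik
  have := main (i : ℕ) hik
  have heta : (⟨(i : ℕ), lt_trans hik hnk⟩ : Fin n) = i := Fin.ext rfl
  rw [heta] at this
  exact this

/-- any feasible stable GSP matching with the diagonal assignment
has `p_j ≥ b_{j+1}`, and consequently the matching with prices `p_j = b_{j+1}`
is bidder-optimal. -/
theorem gsp_prices_and_optimality (n k : ℕ) (hnk : k < n)
    (b : Fin n → ℝ) (hb : StrictAnti b) (hbpos : ∀ i, 0 < b i)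
    (M : ℝ) (hM : b ⟨0, Nat.lt_of_le_of_lt (Nat.zero_le k) hnk⟩ < M) :
    (∀ (u : Fin n → ℝ) (p : Fin k → ℝ) (μ : Fin n → Option (Fin k)),
        Feasible (gspAuction n k b M) u p μ →
        Stable (gspAuction n k b M) u p →
        (∀ i : Fin n, ∀ h : (i : ℕ) < k, μ i = some ⟨(i : ℕ), h⟩) →
        ∀ j : Fin k, p j ≥ b ⟨(j : ℕ) + 1, by have := j.isLt; omega⟩) ∧
    BidderOptimal (gspAuction n k b M)
      (fun i => if h : (i : ℕ) < k then
          M * ((k : ℝ) - (i : ℝ)) - b ⟨(i : ℕ) + 1, by omega⟩ else 0)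
      (fun j => b ⟨(j : ℕ) + 1, by have := j.isLt; omega⟩)
      (fun i => if h : (i : ℕ) < k then some ⟨(i : ℕ), h⟩ else none) := by
  have hMpos := gsp_M_pos hb hbpos hnk hM
  have hbM := gsp_b_lt_M hb hnk hM
  constructor
  · intro u p μ hF hS hdiag j
    exact gsp_price_lb hnk hb hbpos hM hF hS hdiag j (by have := j.isLt; omega)
  · refine ⟨⟨?_, ?_, ?_, ?_, ?_, ?_⟩, ?_, ?_⟩
    · -- injectivity
      intro i i' j hi hi'
      simp only [] at hi hi'
      by_cases h1 : (i : ℕ) < k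
      · rw [dif_pos h1] at hi
        by_cases h2 : (i' : ℕ) < k
        · rw [dif_pos h2] at hi'
          have e1 : (i : ℕ) = (j : ℕ) := congrArg Fin.val (Option.some_injective _ hi)
          have e2 : (i' : ℕ) = (j : ℕ) := congrArg Fin.val (Option.some_injective _ hi')
          exact Fin.ext (by omega)
        · rw [dif_neg h2] at hi'; exact absurd hi' (by simp)
      · rw [dif_neg h1] at hi; exact absurd hi (by simp)
    · -- matched constraints
      intro i j hij
      simp only [] at hij
      by_cases h1 : (i : ℕ) < k
      · rw [dif_pos h1] at hij
        have hji : (j : ℕ) = (i : ℕ) :=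
          (congrArg Fin.val (Option.some_injective _ hij)).symm
        simp only [gspAuction, dif_pos h1]
        refine ⟨(hbpos _).le, ?_, ?_⟩
        · exact hb.antitone (show i ≤ (⟨(j : ℕ) + 1, by have := j.isLt; omega⟩ : Fin n)
            from by simp only [Fin.le_def]; omega)
        · have hbe : b ⟨(i : ℕ) + 1, by omega⟩
              = b ⟨(j : ℕ) + 1, by have := j.isLt; omega⟩ := by
            congr 1
            exact Fin.ext (show (i : ℕ) + 1 = (j : ℕ) + 1 by omega)
          have hce : ((j : ℕ) : ℝ) = ((i : ℕ) : ℝ) := by exact_mod_cast hji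
          rw [hbe, hce]
          ring
      · rw [dif_neg h1] at hij; exact absurd hij (by simp)
    · -- unmatched bidders
      intro i hi
      simp only [] at hi ⊢
      by_cases h1 : (i : ℕ) < k
      · rw [dif_pos h1] at hi; exact absurd hi (by simp)
      · rw [dif_neg h1]
    · -- all slots matched
      intro j hj
      exfalso
      apply hj ⟨(j : ℕ), lt_trans j.isLt hnk⟩
      simp only [dif_pos j.isLt]
    · -- utilities nonnegative
      intro i
      simp only []
      by_cases h1 : (i : ℕ) < k
      · rw [dif_pos h1]
        have h2 := hbM ⟨(i : ℕ) + 1, by omega⟩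
        have h3 : ((i : ℕ) : ℝ) + 1 ≤ (k : ℝ) := by exact_mod_cast h1
        nlinarith
      · rw [dif_neg h1]
    · -- prices nonnegative
      intro j
      exact (hbpos _).le
    · -- stability
      intro i j
      simp only [gspAuction, ge_iff_le, add_zero]
      by_cases h1 : (i : ℕ) < k
      · simp only [dif_pos h1]
        rcases lt_or_ge (j : ℕ) (i : ℕ) with hji | hij
        · right; left
          exact hb.antitone (show (⟨(j : ℕ) + 1, by have := j.isLt; omega⟩ : Fin n) ≤ i
            from by simp only [Fin.le_def]; omega)
        · left
          rcases eq_or_lt_of_le hij with heq | hlt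
          · have hbe : b ⟨(i : ℕ) + 1, by omega⟩
                = b ⟨(j : ℕ) + 1, by have := j.isLt; omega⟩ := by
              congr 1
              exact Fin.ext (show (i : ℕ) + 1 = (j : ℕ) + 1 by omega)
            have hce : ((i : ℕ) : ℝ) = ((j : ℕ) : ℝ) := by exact_mod_cast heq
            rw [hbe, hce]
            linarith
          · have hce : ((i : ℕ) : ℝ) + 1 ≤ ((j : ℕ) : ℝ) := by exact_mod_cast hlt
            have hprod : M * 1 ≤ M * (((j : ℕ) : ℝ) - ((i : ℕ) : ℝ)) :=
              mul_le_mul_of_nonneg_left (by linarith) hMpos.le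
            have hexp : M * ((k : ℝ) - ((i : ℕ) : ℝ)) - M * ((k : ℝ) - ((j : ℕ) : ℝ))
                = M * (((j : ℕ) : ℝ) - ((i : ℕ) : ℝ)) := by ring
            have hb1 := hbM ⟨(i : ℕ) + 1, by omega⟩
            have hb2 := hbpos ⟨(j : ℕ) + 1, by have := j.isLt; omega⟩
            linarith
      · right; left
        exact hb.antitone (show (⟨(j : ℕ) + 1, by have := j.isLt; omega⟩ : Fin n) ≤ i
          from by simp only [Fin.le_def]; have := j.isLt; omega)
    · -- bidder-optimality
      intro u p μ hF hS i
      have hdiag := gsp_diag hnk hb hbpos hM hF hS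
      simp only []
      by_cases h1 : (i : ℕ) < k
      · rw [dif_pos h1]
        have hmm := (hF.2.1 i ⟨(i : ℕ), h1⟩ (hdiag i h1)).2.2
        simp only [gspAuction] at hmm
        have hpl := gsp_price_lb hnk hb hbpos hM hF hS hdiag ⟨(i : ℕ), h1⟩ (by omega)
        linarith
      · rw [dif_neg h1]
        have hn : μ i = none := gsp_none_of_diag hF.1 hnk hdiag i (by omega)
        have := hF.2.2.1 i hn
        linarith
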